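/- Let β > α ≥ 0 be real numbers, let a ∈ ℂ ∖ (−∞, 0], and let s ∈ ℂ with −α < Re s < β − α. Then the function t ↦ t^{s+α−1}(a+t)^{−β} is absolutely integrable on (0, ∞) and ∫₀^∞ t^{s+α−1}(a+t)^{−β} dt = (a^{s+α−β} / Γ(β)) · Γ(s+α) · Γ(β−α−s). -/

import Mathlib

/- STATEMENT 8: the Mellin transform of `t ↦ t^α (a+t)^{-β}` (Lemma B.3 of the paper):
for `β > α ≥ 0`, `a ∈ ℂ ∖ (−∞,0]` and `−α < Re s < β − α`,
`∫₀^∞ t^{s+α−1}(a+t)^{−β} dt = (a^{s+α−β}/Γ(β)) Γ(s+α) Γ(β−α−s)`.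
Complex powers are principal-branch powers (`Complex.cpow`). -/

open MeasureTheory Complex

lemma aux_slit_ne {a : ℂ} (ha : ∀ r : ℝ, r ≤ 0 → a ≠ (r : ℂ)) {t : ℝ} (ht : 0 ≤ t) :
    a + t ≠ 0 := by
  intro h
  apply ha (-t) (by linarith)
  rw [Complex.ofReal_neg]
  linear_combination h

lemma aux_lb {a : ℂ} (ha : ∀ r : ℝ, r ≤ 0 → a ≠ (r : ℂ)) :
    ∃ c > 0, c ≤ 1 ∧ ∀ t : ℝ, 0 ≤ t → c * (1 + t) ≤ ‖a + t‖ := by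
  obtain ⟨D, hD0, hD⟩ : ∃ D > 0, ∀ t : ℝ, 0 ≤ t → D ≤ ‖a + t‖ := by
    rcases lt_or_ge a.re 0 with h | h
    · refine ⟨|a.im|, ?_, fun t ht => ?_⟩
      · rcases eq_or_ne a.im 0 with h0 | h0
        · exact absurd (Complex.ext rfl h0 : a = (a.re : ℂ)) (ha a.re h.le)
        · exact abs_pos.mpr h0
      · calc |a.im| = |(a + t).im| := by simp
          _ ≤ ‖a + t‖ := Complex.abs_im_le_norm _
    · refine ⟨‖a‖, norm_pos_iff.mpr (aux_slit_ne ha le_rfl ∘ fun h' => by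
        simpa using h'), fun t ht => ?_⟩
      rw [Complex.norm_def, Complex.norm_def]
      apply Real.sqrt_le_sqrt
      simp only [Complex.normSq_apply, Complex.add_re, Complex.add_im,
        Complex.ofReal_re, Complex.ofReal_im, add_zero]
      nlinarith
  set A := ‖a‖ with hA
  refine ⟨min (min D 1 / (2 * (A + 1))) (1/2), ?_, ?_, fun t ht => ?_⟩
  · have : (0:ℝ) < A + 1 := by positivity
    positivity
  · refine (min_le_right _ _).trans (by norm_num)
  · rcases le_or_gt t (2 * A + 1) with h | h
    · calc min (min D 1 / (2 * (A + 1))) (1/2) * (1 + t)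
          ≤ min D 1 / (2 * (A + 1)) * (2 * (A + 1)) := by
            apply mul_le_mul (min_le_left _ _) (by linarith) (by linarith) (by positivity)
        _ = min D 1 := by field_simp; exact div_self (by positivity)
        _ ≤ D := min_le_left _ _
        _ ≤ ‖a + t‖ := hD t ht
    · have h1 : t - A ≤ ‖a + t‖ := by
        have h2 : ‖(t:ℂ)‖ - ‖-a‖ ≤ ‖(t:ℂ) - (-a)‖ := norm_sub_norm_le _ _
        simp only [sub_neg_eq_add, norm_neg,
          Complex.norm_real, Real.norm_eq_abs, _root_.abs_of_nonneg ht] at h2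
        rw [add_comm] at h2
        linarith
      calc min (min D 1 / (2 * (A + 1))) (1/2) * (1 + t) ≤ 1/2 * (1 + t) := by
            apply mul_le_mul_of_nonneg_right (min_le_right _ _) (by linarith)
        _ ≤ t - A := by linarith
        _ ≤ ‖a + t‖ := h1

lemma aux_cont {σ b : ℝ} : ContinuousOn (fun t : ℝ => t ^ (σ - 1) * (1 + t) ^ (-b))
    (Set.Ioi 0) := by
  intro t ht
  have ht : (0:ℝ) < t := ht
  exact ((Real.continuousAt_rpow_const t _ (Or.inl ht.ne')).mul
    (((continuous_const.add continuous_id).continuousAt).rpow_const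
      (Or.inl (by show (1:ℝ) + t ≠ 0; positivity)))).continuousWithinAt

lemma aux_real_int {σ b : ℝ} (hσ : 0 < σ) (hb : σ < b) :
    IntegrableOn (fun t : ℝ => t ^ (σ - 1) * (1 + t) ^ (-b)) (Set.Ioi 0) := by
  have hmeas : ∀ s ⊆ Set.Ioi (0:ℝ), MeasurableSet s →
      AEStronglyMeasurable (fun t : ℝ => t ^ (σ - 1) * (1 + t) ^ (-b)) (volume.restrict s) :=
    fun s hs hms => (aux_cont.mono hs).aestronglyMeasurable hms
  have h1 : IntegrableOn (fun t : ℝ => t ^ (σ - 1) * (1 + t) ^ (-b)) (Set.Ioc 0 1) := by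
    have hi : IntegrableOn (fun t : ℝ => t ^ (σ - 1)) (Set.Ioc 0 1) := by
      have := intervalIntegral.intervalIntegrable_rpow' (a := 0) (b := 1) (r := σ - 1) (by linarith)
      rwa [intervalIntegrable_iff_integrableOn_Ioc_of_le zero_le_one] at this
    refine hi.mono' (hmeas _ (Set.Ioc_subset_Ioi_self) measurableSet_Ioc) ?_
    filter_upwards [ae_restrict_mem measurableSet_Ioc] with t ht
    have ht0 : 0 < t := ht.1
    rw [norm_mul, Real.norm_rpow_of_nonneg ht0.le, Real.norm_rpow_of_nonneg (by linarith),
      Real.norm_eq_abs, Real.norm_eq_abs, _root_.abs_of_nonneg ht0.le,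
      _root_.abs_of_nonneg (by linarith : (0:ℝ) ≤ 1 + t)]
    calc t ^ (σ - 1) * (1 + t) ^ (-b) ≤ t ^ (σ - 1) * 1 :=
          mul_le_mul_of_nonneg_left
            (Real.rpow_le_one_of_one_le_of_nonpos (by linarith) (by linarith))
            (Real.rpow_nonneg ht0.le _)
      _ = t ^ (σ - 1) := mul_one _
  have h2 : IntegrableOn (fun t : ℝ => t ^ (σ - 1) * (1 + t) ^ (-b)) (Set.Ioi 1) := by
    have hi : IntegrableOn (fun t : ℝ => t ^ (σ - 1 - b)) (Set.Ioi 1) :=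
      integrableOn_Ioi_rpow_of_lt (by linarith) one_pos
    refine hi.mono' (hmeas _ (fun x hx => Set.mem_Ioi.mpr (lt_trans one_pos (Set.mem_Ioi.mp hx))) measurableSet_Ioi) ?_
    filter_upwards [ae_restrict_mem measurableSet_Ioi] with t ht
    have ht0 : (0:ℝ) < t := lt_trans one_pos ht
    rw [norm_mul, Real.norm_rpow_of_nonneg ht0.le, Real.norm_rpow_of_nonneg (by linarith),
      Real.norm_eq_abs, Real.norm_eq_abs, _root_.abs_of_nonneg ht0.le,
      _root_.abs_of_nonneg (by linarith : (0:ℝ) ≤ 1 + t)]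
    calc t ^ (σ - 1) * (1 + t) ^ (-b) ≤ t ^ (σ - 1) * t ^ (-b) :=
          mul_le_mul_of_nonneg_left
            (Real.rpow_le_rpow_of_nonpos ht0 (by linarith : t ≤ 1 + t) (by linarith : -b ≤ 0))
            (Real.rpow_nonneg ht0.le _)
      _ = t ^ (σ - 1 - b) := by rw [← Real.rpow_add ht0]; ring_nf
  have : Set.Ioi (0:ℝ) = Set.Ioc 0 1 ∪ Set.Ioi 1 := (Set.Ioc_union_Ioi_eq_Ioi zero_le_one).symm
  rw [this]
  exact h1.union h2

lemma aux_mem_slit {a : ℂ} (ha : ∀ r : ℝ, r ≤ 0 → a ≠ (r : ℂ)) {t : ℝ} (ht : 0 ≤ t) :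
    a + t ∈ Complex.slitPlane := by
  rw [Complex.mem_slitPlane_iff]
  by_contra h
  push_neg at h
  obtain ⟨h1, h2⟩ := h
  simp only [Complex.add_re, Complex.add_im, Complex.ofReal_re, Complex.ofReal_im,
    add_zero] at h1 h2
  exact ha (a.re) (by linarith) (Complex.ext rfl h2)

lemma aux_norm {a : ℂ} (ha : ∀ r : ℝ, r ≤ 0 → a ≠ (r : ℂ)) (w : ℂ) (b : ℝ) {t : ℝ}
    (ht : 0 < t) :
    ‖(t : ℂ) ^ (w - 1) * (a + t) ^ (-(b:ℂ))‖ =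
      t ^ (w.re - 1) * ‖a + t‖ ^ (-b) := by
  rw [norm_mul,
    Complex.norm_cpow_eq_rpow_re_of_pos ht, Complex.sub_re, Complex.one_re]
  congr 1
  have : -(b:ℂ) = ((-b : ℝ) : ℂ) := by push_cast; ring
  rw [this, Complex.norm_cpow_real]

lemma aux_contOn {a : ℂ} (ha : ∀ r : ℝ, r ≤ 0 → a ≠ (r : ℂ)) (w : ℂ) (b : ℝ) :
    ContinuousOn (fun t : ℝ => (t : ℂ) ^ (w - 1) * (a + t) ^ (-(b:ℂ))) (Set.Ioi 0) := by
  intro t ht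
  have ht : (0:ℝ) < t := ht
  refine ContinuousAt.continuousWithinAt (ContinuousAt.mul ?_ ?_)
  · exact continuousAt_ofReal_cpow_const t (w - 1) (Or.inr ht.ne')
  · exact ContinuousAt.comp (g := fun z : ℂ => z ^ (-(b:ℂ)))
      (continuousAt_cpow_const (aux_mem_slit ha ht.le))
      ((continuous_const.add Complex.continuous_ofReal).continuousAt)

lemma aux_int {a : ℂ} (ha : ∀ r : ℝ, r ≤ 0 → a ≠ (r : ℂ)) (w : ℂ) (b : ℝ)
    (hw : 0 < w.re) (hwb : w.re < b) :
    IntegrableOn (fun t : ℝ => (t : ℂ) ^ (w - 1) * (a + t) ^ (-(b:ℂ))) (Set.Ioi 0) := by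
  obtain ⟨c, hc0, hc1, hc⟩ := aux_lb ha
  have hint : IntegrableOn (fun t : ℝ => c ^ (-b) * (t ^ (w.re - 1) * (1 + t) ^ (-b)))
      (Set.Ioi 0) := (aux_real_int hw hwb).const_mul _
  refine hint.mono' ((aux_contOn ha w b).aestronglyMeasurable measurableSet_Ioi) ?_
  filter_upwards [ae_restrict_mem measurableSet_Ioi] with t ht
  have ht : (0:ℝ) < t := ht
  rw [aux_norm ha w b ht]
  have h1 : ‖a + t‖ ^ (-b) ≤ (c * (1 + t)) ^ (-b) :=
    Real.rpow_le_rpow_of_nonpos (by positivity) (hc t ht.le) (by linarith)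
  calc t ^ (w.re - 1) * ‖a + t‖ ^ (-b)
      ≤ t ^ (w.re - 1) * (c * (1 + t)) ^ (-b) :=
        mul_le_mul_of_nonneg_left h1 (Real.rpow_nonneg ht.le _)
    _ = c ^ (-b) * (t ^ (w.re - 1) * (1 + t) ^ (-b)) := by
        rw [Real.mul_rpow hc0.le (by linarith)]; ring

lemma aux_image : (fun v : ℝ => v / (1 - v)) '' Set.Ioo 0 1 = Set.Ioi 0 := by
  ext t
  constructor
  · rintro ⟨v, ⟨h0, h1⟩, rfl⟩
    exact div_pos h0 (by linarith)
  · intro ht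
    have ht : (0:ℝ) < t := ht
    refine ⟨t / (1 + t), ⟨div_pos ht (by linarith), by rw [div_lt_one (by linarith)]; linarith⟩, ?_⟩
    show t / (1 + t) / (1 - t / (1 + t)) = t
    have h1 : 1 - t / (1 + t) = 1 / (1 + t) := by field_simp; ring
    rw [h1]
    field_simp

lemma aux_ptwise (w : ℂ) (b : ℝ) {v : ℝ} (h0 : 0 < v) (h1 : v < 1) :
    (((1 - v) ^ 2)⁻¹ : ℝ) • ((↑(v / (1 - v)) : ℂ) ^ (w - 1) *
        ((1:ℂ) + ↑(v / (1 - v))) ^ (-(b:ℂ))) =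
      (v:ℂ) ^ (w - 1) * ((1:ℂ) - v) ^ ((b:ℂ) - w - 1) := by
  have h1v : (0:ℝ) < 1 - v := by linarith
  set c : ℂ := (1:ℂ) - (v:ℝ) with hc
  have hcr : c = ((1 - v : ℝ) : ℂ) := by rw [hc]; push_cast; ring
  have hcne : c ≠ 0 := by
    rw [hcr]; simp only [ne_eq, Complex.ofReal_eq_zero]; intro h; linarith
  have hcarg : c.arg ≠ Real.pi := by
    rw [hcr, Complex.arg_ofReal_of_nonneg h1v.le]
    exact fun h => Real.pi_ne_zero h.symm
  have h1t : (1:ℂ) + ↑(v / (1 - v)) = c⁻¹ := by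
    have h : 1 + v / (1 - v) = (1 - v)⁻¹ := by field_simp; ring
    calc (1:ℂ) + ↑(v / (1 - v)) = ((1 + v / (1 - v) : ℝ) : ℂ) := by push_cast; ring
      _ = (((1 - v)⁻¹ : ℝ) : ℂ) := by rw [h]
      _ = c⁻¹ := by rw [hcr, Complex.ofReal_inv]
  have e1 : (↑(v / (1 - v)) : ℂ) ^ (w - 1) = (v:ℂ) ^ (w - 1) * c ^ (-(w - 1)) := by
    have h := Complex.mul_cpow_ofReal_nonneg h0.le (inv_nonneg.mpr h1v.le) (w - 1)
    calc (↑(v / (1 - v)) : ℂ) ^ (w - 1) = ((v * (1 - v)⁻¹ : ℝ) : ℂ) ^ (w - 1) := by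
          rw [div_eq_mul_inv]
      _ = (v:ℂ) ^ (w - 1) * (((1 - v)⁻¹ : ℝ) : ℂ) ^ (w - 1) := by
          rw [Complex.ofReal_mul]; exact h
      _ = (v:ℂ) ^ (w - 1) * c ^ (-(w - 1)) := by
          rw [Complex.ofReal_inv, ← hcr, Complex.inv_cpow _ _ hcarg, ← Complex.cpow_neg]
  have e2 : ((1:ℂ) + ↑(v / (1 - v))) ^ (-(b:ℂ)) = c ^ (b:ℂ) := by
    rw [h1t, Complex.inv_cpow _ _ hcarg, ← Complex.cpow_neg, neg_neg]
  have e3 : ((((1 - v) ^ 2)⁻¹ : ℝ) : ℂ) = c ^ (-2 : ℂ) := by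
    rw [show (-2 : ℂ) = -((2:ℕ):ℂ) by norm_num, Complex.cpow_neg, Complex.cpow_natCast, hcr]
    push_cast
    ring
  rw [Complex.real_smul, e1, e2, e3]
  rw [mul_comm (c ^ (-2:ℂ)), mul_assoc, ← Complex.cpow_add _ _ hcne, mul_assoc,
    ← Complex.cpow_add _ _ hcne]
  congr 1
  ring

lemma aux_one (w : ℂ) (b : ℝ) (hw : 0 < w.re) (hwb : w.re < b) :
    ∫ t in Set.Ioi (0:ℝ), (t : ℂ) ^ (w - 1) * ((1:ℂ) + t) ^ (-(b:ℂ)) =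
      Complex.Gamma w * Complex.Gamma ((b:ℂ) - w) / Complex.Gamma (b:ℂ) := by
  have hb0 : 0 < b := lt_trans hw hwb
  set g : ℝ → ℂ := fun t => (t : ℂ) ^ (w - 1) * ((1:ℂ) + t) ^ (-(b:ℂ)) with hg
  have hderiv : ∀ v ∈ Set.Ioo (0:ℝ) 1,
      HasDerivWithinAt (fun v : ℝ => v / (1 - v)) (((1 - v) ^ 2)⁻¹) (Set.Ioo 0 1) v := by
    intro v hv
    have hne : 1 - v ≠ 0 := by have := hv.2; intro h; linarith [h]
    have := (hasDerivAt_id v).div ((hasDerivAt_id v).const_sub 1) hne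
    have h2 : ((1 - v) ^ 2)⁻¹ = (1 * (1 - id v) - id v * -1) / (1 - id v) ^ 2 := by
      simp only [id]; ring
    rw [h2]; exact this.hasDerivWithinAt
  have hinj : Set.InjOn (fun v : ℝ => v / (1 - v)) (Set.Ioo 0 1) := by
    intro x hx y hy h
    have hx1 : 1 - x ≠ 0 := by have := hx.2; intro hh; linarith
    have hy1 : 1 - y ≠ 0 := by have := hy.2; intro hh; linarith
    field_simp at h
    linarith
  have key := integral_image_eq_integral_abs_deriv_smul measurableSet_Ioo hderiv hinj g
  rw [aux_image] at key
  rw [key]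
  have : ∫ v in Set.Ioo (0:ℝ) 1, |((1 - v) ^ 2)⁻¹| • g (v / (1 - v)) =
      ∫ v in Set.Ioo (0:ℝ) 1, (v:ℂ) ^ (w - 1) * ((1:ℂ) - v) ^ ((b:ℂ) - w - 1) := by
    refine setIntegral_congr_fun measurableSet_Ioo fun v hv => ?_
    rw [_root_.abs_of_nonneg (by positivity : (0:ℝ) ≤ ((1 - v) ^ 2)⁻¹)]
    exact aux_ptwise w b hv.1 hv.2
  rw [this]
  have hbeta : ∫ v in Set.Ioo (0:ℝ) 1, (v:ℂ) ^ (w - 1) * ((1:ℂ) - v) ^ ((b:ℂ) - w - 1) =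
      Complex.betaIntegral w ((b:ℂ) - w) := by
    rw [Complex.betaIntegral, intervalIntegral.integral_of_le zero_le_one,
      ← MeasureTheory.integral_Ioc_eq_integral_Ioo]
  rw [hbeta]
  have hGamma := Complex.Gamma_mul_Gamma_eq_betaIntegral hw
    (by rw [Complex.sub_re, Complex.ofReal_re]; linarith : 0 < ((b:ℂ) - w).re)
  have hne : Complex.Gamma (b:ℂ) ≠ 0 :=
    Complex.Gamma_ne_zero_of_re_pos (by rw [Complex.ofReal_re]; exact hb0)
  rw [show w + ((b:ℂ) - w) = (b:ℂ) by ring] at hGamma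
  field_simp
  linear_combination hGamma.symm

lemma aux_scale (w : ℂ) (b : ℝ) {x : ℝ} (hx : 0 < x) :
    ∫ t in Set.Ioi (0:ℝ), (t : ℂ) ^ (w - 1) * ((x:ℂ) + t) ^ (-(b:ℂ)) =
      (x:ℂ) ^ (w - b) *
        ∫ t in Set.Ioi (0:ℝ), (t : ℂ) ^ (w - 1) * ((1:ℂ) + t) ^ (-(b:ℂ)) := by
  have hxne : (x:ℂ) ≠ 0 := Complex.ofReal_ne_zero.mpr hx.ne'
  have key := integral_comp_mul_left_Ioi
    (fun t : ℝ => (t : ℂ) ^ (w - 1) * ((x:ℂ) + t) ^ (-(b:ℂ))) 0 hx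
  rw [mul_zero] at key
  have hpt : ∀ u ∈ Set.Ioi (0:ℝ),
      ((x * u : ℝ) : ℂ) ^ (w - 1) * ((x:ℂ) + (x * u : ℝ)) ^ (-(b:ℂ)) =
        (x:ℂ) ^ (w - 1 - b) * ((u : ℂ) ^ (w - 1) * ((1:ℂ) + u) ^ (-(b:ℂ))) := by
    intro u hu
    have hu : (0:ℝ) < u := hu
    have e1 : ((x * u : ℝ) : ℂ) ^ (w - 1) = (x:ℂ) ^ (w - 1) * (u:ℂ) ^ (w - 1) := by
      rw [Complex.ofReal_mul]; exact Complex.mul_cpow_ofReal_nonneg hx.le hu.le _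
    have e2 : ((x:ℂ) + (x * u : ℝ)) ^ (-(b:ℂ)) = (x:ℂ) ^ (-(b:ℂ)) * ((1:ℂ) + u) ^ (-(b:ℂ)) := by
      have : (x:ℂ) + (x * u : ℝ) = ((x * (1 + u) : ℝ) : ℂ) := by push_cast; ring
      rw [this, Complex.ofReal_mul, Complex.mul_cpow_ofReal_nonneg hx.le (by linarith) _]
      push_cast
      ring_nf
    rw [e1, e2, show w - 1 - (b:ℂ) = (w - 1) + (-(b:ℂ)) by ring,
      Complex.cpow_add _ _ hxne]
    ring
  rw [MeasureTheory.setIntegral_congr_fun measurableSet_Ioi hpt] at key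
  rw [MeasureTheory.integral_const_mul] at key
  rw [Complex.real_smul, Complex.ofReal_inv] at key
  have key2 : ∫ t in Set.Ioi (0:ℝ), (t : ℂ) ^ (w - 1) * ((x:ℂ) + t) ^ (-(b:ℂ)) =
      (x:ℂ) * ((x:ℂ) ^ (w - 1 - b) *
        ∫ t in Set.Ioi (0:ℝ), (t : ℂ) ^ (w - 1) * ((1:ℂ) + t) ^ (-(b:ℂ))) := by
    rw [key]
    field_simp
  rw [key2, ← mul_assoc]
  congr 1
  rw [show w - (b:ℂ) = 1 + (w - 1 - b) by ring, Complex.cpow_add _ _ hxne, Complex.cpow_one]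

lemma aux_slit_of_mem {a : ℂ} (h : a ∈ Complex.slitPlane) :
    ∀ r : ℝ, r ≤ 0 → a ≠ (r : ℂ) := by
  intro r hr heq
  rw [Complex.mem_slitPlane_iff, heq] at h
  simp only [Complex.ofReal_re, Complex.ofReal_im, ne_eq, not_true_eq_false, or_false] at h
  · exact absurd h (by simpa using not_lt.mpr hr)

lemma aux_slit_add {a : ℂ} (h : a ∈ Complex.slitPlane) {t : ℝ} (ht : 0 ≤ t) :
    a + t ∈ Complex.slitPlane := by
  rw [Complex.mem_slitPlane_iff] at h ⊢
  rcases h with h | h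
  · left
    simp only [Complex.add_re, Complex.ofReal_re]
    linarith
  · right
    simpa using h

lemma aux_preconn : IsPreconnected Complex.slitPlane := by
  apply isPreconnected_of_forall (1 : ℂ)
  intro y hy
  exact ⟨segment ℝ 1 y, starConvex_one_slitPlane.segment_subset hy,
    left_mem_segment ℝ 1 y, right_mem_segment ℝ 1 y,
    (convex_segment 1 y).isPreconnected⟩

lemma aux_diffAt (w : ℂ) (b : ℝ) (hw : 0 < w.re) (hwb : w.re < b) {a₀ : ℂ}
    (h₀ : a₀ ∈ Complex.slitPlane) :
    DifferentiableAt ℂ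
      (fun a : ℂ => ∫ t in Set.Ioi (0:ℝ), (t : ℂ) ^ (w - 1) * (a + t) ^ (-(b:ℂ))) a₀ := by
  have hb0 : 0 < b := lt_trans hw hwb
  have ha₀ : ∀ r : ℝ, r ≤ 0 → a₀ ≠ (r : ℂ) := aux_slit_of_mem h₀
  obtain ⟨c, hc0, hc1, hc⟩ := aux_lb ha₀
  obtain ⟨ε₁, hε₁0, hε₁⟩ := Metric.isOpen_iff.mp Complex.isOpen_slitPlane a₀ h₀
  set ε := min ε₁ (c / 2) with hε
  have hε0 : 0 < ε := lt_min hε₁0 (by linarith)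
  have hball : Metric.ball a₀ ε ⊆ Complex.slitPlane :=
    fun x hx => hε₁ (Metric.ball_subset_ball (min_le_left _ _) hx)
  have hlow : ∀ x ∈ Metric.ball a₀ ε, ∀ t : ℝ, 0 ≤ t →
      c / 2 * (1 + t) ≤ ‖x + t‖ := by
    intro x hx t ht
    have hdist : ‖x - a₀‖ < c / 2 :=
      lt_of_lt_of_le (mem_ball_iff_norm.mp hx) (min_le_right _ _)
    have h1 : ‖a₀ + t‖ - ‖x - a₀‖ ≤ ‖x + t‖ := by
      have := norm_sub_le (a₀ + t) (x + t)
      have h2 : ‖(a₀ + t) - (x + t)‖ = ‖x - a₀‖ := by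
        rw [show (a₀ + t) - (x + t) = -(x - a₀) by ring, norm_neg]
      have h3 := norm_add_le (x + t) ((a₀ + t) - (x + t))
      rw [show (x + t) + ((a₀ + t) - (x + t)) = a₀ + t by ring, h2] at h3
      linarith
    have h4 := hc t ht
    have h5 : c / 2 * (1 + t) ≤ c * (1 + t) - c / 2 := by nlinarith
    linarith
  set F' : ℂ → ℝ → ℂ := fun x t => (t : ℂ) ^ (w - 1) * (-(b:ℂ) * (x + t) ^ (-(b:ℂ) - 1))
    with hF'
  set bound : ℝ → ℝ :=
    fun t => b * (c / 2) ^ (-(b + 1)) * (t ^ (w.re - 1) * (1 + t) ^ (-(b + 1))) with hbound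
  have key := hasDerivAt_integral_of_dominated_loc_of_deriv_le
    (μ := volume.restrict (Set.Ioi (0:ℝ)))
    (F := fun a t => (t : ℂ) ^ (w - 1) * (a + t) ^ (-(b:ℂ))) (F' := F')
    (x₀ := a₀) (bound := bound) (Metric.ball_mem_nhds a₀ hε0) ?_ ?_ ?_ ?_ ?_ ?_
  · exact key.2.differentiableAt
  · filter_upwards [Metric.ball_mem_nhds a₀ hε0] with x hx
    exact ((aux_contOn (aux_slit_of_mem (hball hx)) w b).aestronglyMeasurable
      measurableSet_Ioi)
  · exact aux_int ha₀ w b hw hwb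
  · refine (ContinuousOn.aestronglyMeasurable ?_ measurableSet_Ioi)
    intro t ht
    have ht : (0:ℝ) < t := ht
    refine ContinuousAt.continuousWithinAt (ContinuousAt.mul ?_ (ContinuousAt.mul
      continuousAt_const ?_))
    · exact continuousAt_ofReal_cpow_const t (w - 1) (Or.inr ht.ne')
    · exact ContinuousAt.comp (g := fun z : ℂ => z ^ (-(b:ℂ) - 1))
        (continuousAt_cpow_const (aux_slit_add h₀ ht.le))
        ((continuous_const.add Complex.continuous_ofReal).continuousAt)
  · filter_upwards [ae_restrict_mem measurableSet_Ioi] with t ht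
    intro x hx
    have ht : (0:ℝ) < t := ht
    have hxa : ‖x + t‖ ^ (-(b+1)) ≤ (c / 2 * (1 + t)) ^ (-(b+1)) :=
      Real.rpow_le_rpow_of_nonpos (by positivity) (hlow x hx t ht.le) (by linarith)
    have hnorm : ‖F' x t‖ = t ^ (w.re - 1) * (b * ‖x + t‖ ^ (-(b+1))) := by
      rw [hF']
      simp only [norm_mul]
      rw [Complex.norm_cpow_eq_rpow_re_of_pos ht, Complex.sub_re, Complex.one_re]
      congr 1
      rw [norm_neg, Complex.norm_real, Real.norm_eq_abs, _root_.abs_of_nonneg hb0.le]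
      congr 1
      have : -(b:ℂ) - 1 = ((-(b+1) : ℝ) : ℂ) := by push_cast; ring
      rw [this, Complex.norm_cpow_real]
    rw [hnorm, hbound]
    calc t ^ (w.re - 1) * (b * ‖x + t‖ ^ (-(b+1)))
        ≤ t ^ (w.re - 1) * (b * (c / 2 * (1 + t)) ^ (-(b+1))) := by
          apply mul_le_mul_of_nonneg_left (mul_le_mul_of_nonneg_left hxa hb0.le)
            (Real.rpow_nonneg ht.le _)
      _ = b * (c / 2) ^ (-(b + 1)) * (t ^ (w.re - 1) * (1 + t) ^ (-(b + 1))) := by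
          rw [Real.mul_rpow (by positivity) (by linarith)]; ring
  · exact (aux_real_int hw (by linarith : w.re < b + 1)).const_mul _
  · filter_upwards [ae_restrict_mem measurableSet_Ioi] with t ht
    intro x hx
    have ht : (0:ℝ) < t := ht
    have hd : HasDerivAt (fun y : ℂ => (y + (t:ℂ)) ^ (-(b:ℂ)))
        (-(b:ℂ) * (x + t) ^ (-(b:ℂ) - 1) * 1) x :=
      HasDerivAt.cpow_const ((hasDerivAt_id x).add_const (t:ℂ))
        (aux_slit_add (hball hx) ht.le)
    have := hd.const_mul ((t:ℂ) ^ (w - 1))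
    rw [mul_one] at this
    exact this

lemma aux_main (w : ℂ) (b : ℝ) (hw : 0 < w.re) (hwb : w.re < b) {a : ℂ}
    (ha : ∀ r : ℝ, r ≤ 0 → a ≠ (r : ℂ)) :
    ∫ t in Set.Ioi (0:ℝ), (t : ℂ) ^ (w - 1) * (a + t) ^ (-(b:ℂ)) =
      a ^ (w - b) *
        ∫ t in Set.Ioi (0:ℝ), (t : ℂ) ^ (w - 1) * ((1:ℂ) + t) ^ (-(b:ℂ)) := by
  set F : ℂ → ℂ :=
    fun a => ∫ t in Set.Ioi (0:ℝ), (t : ℂ) ^ (w - 1) * (a + t) ^ (-(b:ℂ)) with hF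
  set G : ℂ → ℂ :=
    fun a => a ^ (w - b) *
      ∫ t in Set.Ioi (0:ℝ), (t : ℂ) ^ (w - 1) * ((1:ℂ) + t) ^ (-(b:ℂ)) with hG
  have hamem : a ∈ Complex.slitPlane := by
    have := aux_mem_slit ha (t := 0) le_rfl
    simpa using this
  have hFd : DifferentiableOn ℂ F Complex.slitPlane :=
    fun z hz => (aux_diffAt w b hw hwb hz).differentiableWithinAt
  have hFa : AnalyticOnNhd ℂ F Complex.slitPlane :=
    hFd.analyticOnNhd Complex.isOpen_slitPlane
  have hGa : AnalyticOnNhd ℂ G Complex.slitPlane := by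
    refine DifferentiableOn.analyticOnNhd ?_ Complex.isOpen_slitPlane
    intro z hz
    exact ((((hasDerivAt_id z).cpow_const hz).differentiableAt).mul_const _).differentiableWithinAt
  have h1mem : (1 : ℂ) ∈ Complex.slitPlane := by
    rw [Complex.mem_slitPlane_iff]; left; norm_num
  have hfreq : ∃ᶠ z in nhdsWithin (1:ℂ) {(1:ℂ)}ᶜ, F z = G z := by
    have htendsto : Filter.Tendsto (fun n : ℕ => ((1 + 1/(n+1) : ℝ) : ℂ)) Filter.atTop
        (nhdsWithin (1:ℂ) {(1:ℂ)}ᶜ) := by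
      rw [tendsto_nhdsWithin_iff]
      constructor
      · have : Filter.Tendsto (fun n : ℕ => (1 + 1/(n+1) : ℝ)) Filter.atTop (nhds 1) := by
          have h0 := tendsto_one_div_add_atTop_nhds_zero_nat (𝕜 := ℝ)
          have := h0.const_add (1:ℝ)
          simpa using this
        have h2 := (Complex.continuous_ofReal.tendsto 1).comp this
        rw [show ((1:ℝ):ℂ) = (1:ℂ) by norm_num] at h2
        exact h2
      · refine Filter.Eventually.of_forall fun n => ?_
        simp only [Set.mem_compl_iff, Set.mem_singleton_iff]
        intro h
        rw [show (1:ℂ) = ((1:ℝ):ℂ) by norm_num, Complex.ofReal_inj] at h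
        have : (1:ℝ)/(n+1) > 0 := by positivity
        linarith
    refine htendsto.frequently (Filter.Frequently.of_forall fun n => ?_)
    have hx : (0:ℝ) < 1 + 1/(n+1) := by positivity
    exact aux_scale w b hx
  exact hFa.eqOn_of_preconnected_of_frequently_eq hGa aux_preconn h1mem hfreq hamem

theorem stmt_8 (α β : ℝ) (hα : 0 ≤ α) (hβ : α < β)
    (a : ℂ) (ha : ∀ r : ℝ, r ≤ 0 → a ≠ (r : ℂ))
    (s : ℂ) (hs1 : -α < s.re) (hs2 : s.re < β - α) :
    IntegrableOn (fun t : ℝ => (t : ℂ) ^ (s + (α : ℂ) - 1) * (a + (t : ℂ)) ^ (-(β : ℂ)))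
      (Set.Ioi 0) ∧
    ∫ t in Set.Ioi (0 : ℝ), (t : ℂ) ^ (s + (α : ℂ) - 1) * (a + (t : ℂ)) ^ (-(β : ℂ)) =
      a ^ (s + (α : ℂ) - (β : ℂ)) / Complex.Gamma (β : ℂ) *
        Complex.Gamma (s + (α : ℂ)) * Complex.Gamma ((β : ℂ) - (α : ℂ) - s) := by
  set w : ℂ := s + (α : ℂ) with hwdef
  have hw : 0 < w.re := by
    rw [hwdef, Complex.add_re, Complex.ofReal_re]; linarith
  have hwb : w.re < β := by
    rw [hwdef, Complex.add_re, Complex.ofReal_re]; linarith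
  constructor
  · exact aux_int ha w β hw hwb
  · rw [aux_main w β hw hwb ha, aux_one w β hw hwb]
    rw [show (β:ℂ) - w = (β:ℂ) - (α:ℂ) - s by rw [hwdef]; ring]
    have hane : a ≠ 0 := by
      intro h
      exact ha 0 le_rfl (by rw [h]; norm_num)
    rw [hwdef]
    ring
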